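/- Suppose Ω is a compact topological space and (P,σ) is a Markov operator cocycle that is prior mixing for homogeneous observables: there is a ℙ-full set Ω₀ such that for all ω ∈ Ω₀, f ∈ L^1_0(X,m), g ∈ L^∞(X,m), ∫ P_ω^{(n)} f · g dm → 0. Then (P,σ) is prior mixing for inhomogeneous observables in C(Ω, L^∞(X,m)): for all ω ∈ Ω₀, f ∈ L^1_0(X,m) and every bounded continuous map g: Ω → L^∞(X,m), one has ∫_X P_ω^{(n)} f · g_{σ^n ω} dm → 0 as n → ∞. -/

import Mathlib

open MeasureTheory Filter Topology
open scoped ENNReal NNReal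

/-- The cocycle `P_ω^{(n)} = P_{σ^{n-1}ω} ∘ ⋯ ∘ P_ω` generated by a family of
operators over the driving system `σ`. -/
noncomputable def coc {Ω M : Type*} [Monoid M] (P : Ω → M) (σ : Ω → Ω) : ℕ → Ω → M
  | 0, _ => 1
  | n + 1, ω => P (σ^[n] ω) * coc P σ n ω

section Aux
set_option linter.unusedSectionVars false

variable {X : Type*} [MeasurableSpace X] {m : Measure X} [IsProbabilityMeasure m]

lemma ae_bound_of_Linfty (g : Lp ℝ ⊤ m) : ∀ᵐ x ∂m, ‖g x‖ ≤ ‖g‖ := by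
  have h := MeasureTheory.ae_le_eLpNormEssSup (μ := m) (f := (g : X → ℝ))
  have hfin : eLpNormEssSup (g : X → ℝ) m ≠ ⊤ := by
    have h2 := Lp.eLpNorm_lt_top g
    rw [eLpNorm_exponent_top] at h2
    exact h2.ne
  filter_upwards [h] with x hx
  have h3 : ((‖(g : X → ℝ) x‖₊ : ℝ≥0∞)).toReal ≤ (eLpNormEssSup (g : X → ℝ) m).toReal :=
    ENNReal.toReal_mono hfin hx
  simpa [Lp.norm_def, eLpNorm_exponent_top] using h3

lemma integrable_mul_Linfty (c : Lp ℝ 1 m) (g : Lp ℝ ⊤ m) :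
    Integrable (fun x => c x * g x) m := by
  have h := Integrable.bdd_mul (c := ‖g‖) (L1.integrable_coeFn c)
    (Lp.aestronglyMeasurable g) (ae_bound_of_Linfty g)
  simpa [mul_comm] using h

noncomputable def pairCLM (c : Lp ℝ 1 m) : Lp ℝ ⊤ m →L[ℝ] ℝ :=
  LinearMap.mkContinuous
    { toFun := fun g => ∫ x, c x * g x ∂m
      map_add' := by
        intro g g'
        have h : (fun x => (c : X → ℝ) x * ((g + g' : Lp ℝ ⊤ m) : X → ℝ) x)
            =ᵐ[m] (fun x => (c : X → ℝ) x * (g : X → ℝ) x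
              + (c : X → ℝ) x * (g' : X → ℝ) x) := by
          filter_upwards [Lp.coeFn_add g g',
            AEEqFun.coeFn_add (g : X →ₘ[m] ℝ) (g' : X →ₘ[m] ℝ)] with x hx hx2
          simp [hx, hx2, Pi.add_apply, mul_add]
        rw [integral_congr_ae h, integral_add (integrable_mul_Linfty c g)
          (integrable_mul_Linfty c g')]
      map_smul' := by
        intro r g
        have h : (fun x => (c : X → ℝ) x * ((r • g : Lp ℝ ⊤ m) : X → ℝ) x)
            =ᵐ[m] (fun x => r * ((c : X → ℝ) x * (g : X → ℝ) x)) := by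
          filter_upwards [Lp.coeFn_smul r g] with x hx
          simp [hx]; ring
        simp only [RingHom.id_apply]
        rw [integral_congr_ae h, integral_const_mul, smul_eq_mul] }
    ‖c‖
    (by
      intro g
      simp only [LinearMap.coe_mk, AddHom.coe_mk]
      calc ‖∫ x, c x * g x ∂m‖ ≤ ∫ x, ‖c x * g x‖ ∂m := norm_integral_le_integral_norm _
        _ ≤ ∫ x, ‖c x‖ * ‖g‖ ∂m := by
            refine integral_mono_ae ((integrable_mul_Linfty c g).norm)
              ((L1.integrable_coeFn c).norm.mul_const _) ?_
            filter_upwards [ae_bound_of_Linfty g] with x hx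
            rw [norm_mul]
            exact mul_le_mul_of_nonneg_left hx (norm_nonneg _)
        _ = ‖c‖ * ‖g‖ := by
            rw [integral_mul_const, L1.norm_eq_integral_norm])

lemma pairCLM_apply (c : Lp ℝ 1 m) (g : Lp ℝ ⊤ m) :
    pairCLM c g = ∫ x, c x * g x ∂m := rfl

end Aux


/-- If `Ω` is compact and the Markov operator cocycle `(P,σ)` is prior mixing for
homogeneous observables on a full-measure set `Ω₀`, then it is prior mixing for
inhomogeneous observables in `C(Ω, L^∞(X,m))`: for all `ω ∈ Ω₀`, all mean-zero
`f ∈ L¹` and all bounded continuous `g : Ω → L^∞`,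
`∫ P_ω^{(n)} f · g_{σⁿω} dm → 0`. -/
theorem prior_homogeneous_implies_prior_inhomogeneous_continuous
    {X : Type*} [MeasurableSpace X] (m : Measure X) [IsProbabilityMeasure m]
    {Ω : Type*} [TopologicalSpace Ω] [CompactSpace Ω]
    [MeasurableSpace Ω] [BorelSpace Ω]
    (Pr : Measure Ω) [IsProbabilityMeasure Pr]
    (σ : Ω → Ω) (hσ : MeasurePreserving σ Pr Pr)
    (P : Ω → Module.End ℝ (Lp ℝ 1 m))
    (hP : ∀ᵐ ω ∂Pr, (∀ f : Lp ℝ 1 m, 0 ≤ f → 0 ≤ P ω f) ∧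
      ∀ f : Lp ℝ 1 m, ∫ x, (P ω f) x ∂m = ∫ x, f x ∂m)
    (Ω₀ : Set Ω) (hΩ₀ : Pr Ω₀ = 1)
    (hmix : ∀ ω ∈ Ω₀, ∀ (f : Lp ℝ 1 m), ∫ x, f x ∂m = 0 → ∀ (g : Lp ℝ ⊤ m),
      Tendsto (fun n => ∫ x, (coc P σ n ω f) x * g x ∂m) atTop (𝓝 0)) :
    ∀ ω ∈ Ω₀, ∀ (f : Lp ℝ 1 m), ∫ x, f x ∂m = 0 →
      ∀ (g : Ω → Lp ℝ ⊤ m), Continuous g →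
        Tendsto (fun n => ∫ x, (coc P σ n ω f) x * (g (σ^[n] ω)) x ∂m)
          atTop (𝓝 0) := by
  intro ω hω f hf g hg
  haveI : Fact ((1 : ℝ≥0∞) ≤ ⊤) := ⟨le_top⟩
  set Λ : ℕ → (Lp ℝ ⊤ m →L[ℝ] ℝ) := fun n => pairCLM (coc P σ n ω f) with hΛ
  have hten : ∀ y : Lp ℝ ⊤ m, Tendsto (fun n => Λ n y) atTop (𝓝 0) :=
    fun y => hmix ω hω f hf y
  -- Banach–Steinhaus
  obtain ⟨C, hC⟩ : ∃ C, ∀ n, ‖Λ n‖ ≤ C := by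
    apply banach_steinhaus
    intro y
    have hb : BddAbove (Set.range fun n => ‖Λ n y‖) :=
      ((hten y).norm.bddAbove_range)
    obtain ⟨C, hC⟩ := hb
    exact ⟨C, fun n => hC ⟨n, rfl⟩⟩
  have hC0 : 0 ≤ C := le_trans (norm_nonneg _) (hC 0)
  show Tendsto (fun n => Λ n (g (σ^[n] ω))) atTop (𝓝 0)
  rw [NormedAddCommGroup.tendsto_nhds_zero]
  intro ε hε
  set δ := ε / (2 * (C + 1)) with hδdef
  have hδ : 0 < δ := by positivity
  have hK : IsCompact (Set.range g) := isCompact_range hg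
  obtain ⟨t, ht⟩ := hK.elim_finite_subcover (fun i : Ω => Metric.ball (g i) δ)
    (fun i => Metric.isOpen_ball)
    (by rintro _ ⟨i, rfl⟩; exact Set.mem_iUnion.2 ⟨i, Metric.mem_ball_self hδ⟩)
  have hev : ∀ᶠ n in atTop, ∀ i ∈ t, ‖Λ n (g i)‖ < ε / 2 := by
    rw [eventually_all_finset]
    intro i _
    exact (NormedAddCommGroup.tendsto_nhds_zero.mp (hten (g i))) (ε / 2) (by positivity)
  filter_upwards [hev] with n hn
  obtain ⟨i, hit, hib⟩ : ∃ i ∈ t, g (σ^[n] ω) ∈ Metric.ball (g i) δ := by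
    have := ht ⟨σ^[n] ω, rfl⟩
    simpa using this
  have h1 : ‖Λ n (g (σ^[n] ω)) - Λ n (g i)‖ ≤ C * δ := by
    rw [← map_sub]
    calc ‖Λ n (g (σ^[n] ω) - g i)‖ ≤ ‖Λ n‖ * ‖g (σ^[n] ω) - g i‖ :=
          (Λ n).le_opNorm _
      _ ≤ C * δ := by
          apply mul_le_mul (hC n) _ (norm_nonneg _) hC0
          rw [← dist_eq_norm]
          exact le_of_lt hib
  have h2 : C * δ < ε / 2 := by
    rw [hδdef, show C * (ε / (2 * (C + 1))) = C / (C + 1) * (ε / 2) by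
      rcases eq_or_lt_of_le hC0 with h0 | h0
      · rw [← h0]; ring
      · field_simp]
    have hlt : C / (C + 1) < 1 := by
      rw [div_lt_one (by positivity)]; linarith
    calc C / (C + 1) * (ε / 2) < 1 * (ε / 2) :=
          mul_lt_mul_of_pos_right hlt (by positivity)
      _ = ε / 2 := one_mul _
  calc ‖Λ n (g (σ^[n] ω))‖ ≤ ‖Λ n (g (σ^[n] ω)) - Λ n (g i)‖ + ‖Λ n (g i)‖ := by
        have := norm_add_le (Λ n (g (σ^[n] ω)) - Λ n (g i)) (Λ n (g i))
        simpa using this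
    _ < C * δ + ε / 2 := by
        have := hn i hit
        apply add_lt_add_of_le_of_lt h1 this
    _ < ε / 2 + ε / 2 := by linarith
    _ = ε := by ring
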